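/- Let G_3 be the directed graph with adjacency matrix A = [[1,1],[1,0]] (Fibonacci graph). Define c_n(1), c_n(2) by c_0(1)=c_0(2)=1 and c_{n+1}(1) = Σ_{k=0}^n c_{n-k}(1)(c_k(1)+c_k(2)), c_{n+1}(2) = Σ_{k=0}^n c_{n-k}(2) c_k(1). Then for n ≥ 1, c_n(1) = (2/n)·binom(3n+1, n-1) and c_n(2) = (1/n)·binom(3n, n-1). -/
import Mathlib


open Finset

def NN : ℕ → ℕ → ℕ
  | 0, 0 => 1
  | 0, _ + 1 => 0
  | _ + 1, 0 => 1
  | p + 1, n + 1 => NN p (n + 1) + NN (p + 3) n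
termination_by p n => (n, p)

lemma NN_zero (p : ℕ) : NN p 0 = 1 := by cases p <;> rw [NN]

lemma NN_succ_succ (p n : ℕ) : NN (p+1) (n+1) = NN p (n+1) + NN (p+3) n := by
  rw [NN]

lemma NN_zero_succ (n : ℕ) : NN 0 (n+1) = 0 := by rw [NN]

lemma NN_conv (q : ℕ) : ∀ n p, NN (p + q) n =
    ∑ k ∈ range (n+1), NN p k * NN q (n - k) := by
  intro n
  induction n with
  | zero => intro p; simp [NN_zero]
  | succ n ih =>
    intro p
    induction p with
    | zero =>
      rw [Finset.sum_eq_single 0]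
      · simp [NN_zero]
      · intro k hk hne
        obtain ⟨j, rfl⟩ := Nat.exists_eq_succ_of_ne_zero hne
        simp [NN_zero_succ]
      · simp
    | succ p ihp =>
      have e1 : NN (p + 1 + q) (n+1) = NN (p+q) (n+1) + NN ((p+3)+q) n := by
        have h : p + 1 + q = (p + q) + 1 := by ring
        have h2 : p + q + 3 = (p+3)+q := by ring
        rw [h, NN_succ_succ, h2]
      have key : ∑ k ∈ range (n+1+1), NN (p+1) k * NN q (n+1-k)
          = ∑ k ∈ range (n+1+1), NN p k * NN q (n+1-k)
            + ∑ k ∈ range (n+1), NN (p+3) k * NN q (n-k) := by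
        rw [Finset.sum_range_succ' (fun k => NN (p+1) k * NN q (n+1-k)) (n+1),
          Finset.sum_range_succ' (fun k => NN p k * NN q (n+1-k)) (n+1)]
        have e2 : ∀ i ∈ range (n+1), NN (p+1) (i+1) * NN q (n + 1 - (i+1)) =
            NN p (i+1) * NN q (n + 1 - (i+1)) + NN (p+3) i * NN q (n - i) := by
          intro i hi
          rw [NN_succ_succ]
          have h : n + 1 - (i+1) = n - i := by omega
          rw [h, add_mul]
        rw [Finset.sum_congr rfl e2, Finset.sum_add_distrib, NN_zero, NN_zero]
        ring
      rw [e1, ihp, ih (p+3), key]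

lemma NN_master : ∀ n p, (3*n+p) * NN p n = p * Nat.choose (3*n+p) n := by
  intro n
  induction n with
  | zero => intro p; simp [NN_zero]
  | succ n ih =>
    intro p
    induction p with
    | zero => simp [NN_zero_succ]
    | succ p ihp =>
      have ha := ihp
      have hb := ih (p+3)
      have hC := Nat.choose_succ_right_eq (3*n+3+p) n
      have hP := Nat.choose_succ_succ (3*n+3+p) n
      have e1 : 3*(n+1)+p = 3*n+3+p := by ring
      have e2 : 3*n+(p+3) = 3*n+3+p := by ring
      rw [e1] at ha; rw [e2] at hb
      have hMn : 3*n+3+p - n = 2*n+p+3 := by omega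
      rw [hMn] at hC
      have e3 : 3*(n+1)+(p+1) = 3*n+3+p+1 := by ring
      rw [e3, NN_succ_succ]
      have haQ : ((3*n+3+p : ℕ):ℚ) * (NN p (n+1) : ℚ)
          = (p:ℚ) * (Nat.choose (3*n+3+p) (n+1) : ℚ) := by exact_mod_cast ha
      have hbQ : ((3*n+3+p : ℕ):ℚ) * (NN (p+3) n : ℚ)
          = ((p:ℚ)+3) * (Nat.choose (3*n+3+p) n : ℚ) := by exact_mod_cast hb
      have hCQ : (Nat.choose (3*n+3+p) (n+1) : ℚ) * ((n:ℚ)+1)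
          = (Nat.choose (3*n+3+p) n : ℚ) * (2*(n:ℚ)+(p:ℚ)+3) := by exact_mod_cast hC
      have hPQ : (Nat.choose (3*n+3+p+1) (n+1) : ℚ)
          = (Nat.choose (3*n+3+p) n : ℚ) + (Nat.choose (3*n+3+p) (n+1) : ℚ) := by
        exact_mod_cast hP
      have key : ((3*n+3+p+1 : ℕ):ℚ) * ((NN p (n+1) : ℚ) + (NN (p+3) n : ℚ))
          = ((p:ℚ)+1) * (Nat.choose (3*n+3+p+1) (n+1) : ℚ) := by
        have hne : ((3*(n:ℚ)+3+(p:ℚ)) * ((n:ℚ)+1)) ≠ 0 := by positivity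
        apply mul_left_cancel₀ hne
        push_cast at haQ hbQ hCQ hPQ ⊢
        linear_combination ((3*(n:ℚ)+(p:ℚ)+4)*((n:ℚ)+1))*haQ
          + ((3*(n:ℚ)+(p:ℚ)+4)*((n:ℚ)+1))*hbQ - (3*(n:ℚ)+3)*hCQ
          - ((3*(n:ℚ)+(p:ℚ)+3)*((n:ℚ)+1)*((p:ℚ)+1))*hPQ
      exact_mod_cast key


/-- For the Fibonacci graph `G₃` with adjacency matrix `[[1,1],[1,0]]`, the `G₃`-Catalan
numbers rooted at the two vertices, defined by `c₀(1) = c₀(2) = 1` and the recurrences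
`c_{n+1}(1) = Σ_{k=0}^n c_{n-k}(1) (c_k(1) + c_k(2))`,
`c_{n+1}(2) = Σ_{k=0}^n c_{n-k}(2) c_k(1)`, satisfy for `n ≥ 1`:
`c_n(1) = (2/n) * binom(3n+1, n-1)` and `c_n(2) = (1/n) * binom(3n, n-1)`. -/
theorem fibonacci_graph_catalan (c₁ c₂ : ℕ → ℕ)
    (h01 : c₁ 0 = 1) (h02 : c₂ 0 = 1)
    (hrec1 : ∀ n, c₁ (n + 1) =
      ∑ k ∈ Finset.range (n + 1), c₁ (n - k) * (c₁ k + c₂ k))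
    (hrec2 : ∀ n, c₂ (n + 1) =
      ∑ k ∈ Finset.range (n + 1), c₂ (n - k) * c₁ k) :
    ∀ n : ℕ, 1 ≤ n →
      (c₁ n : ℚ) = (2 / n) * (Nat.choose (3 * n + 1) (n - 1)) ∧
      (c₂ n : ℚ) = (1 / n) * (Nat.choose (3 * n) (n - 1)) := by
  -- identification with NN
  have key : ∀ n, c₁ n = NN 2 n ∧ c₂ n = NN 1 n := by
    intro n
    induction n using Nat.strong_induction_on with
    | _ n ih =>
      match n with
      | 0 => exact ⟨by rw [h01, NN_zero], by rw [h02, NN_zero]⟩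
      | n+1 =>
        have hsum1 : ∀ k ∈ range (n+1), c₁ (n - k) * (c₁ k + c₂ k)
            = NN 2 (n-k) * (NN 2 k + NN 1 k) := by
          intro k hk
          have hk' : k ≤ n := by simpa [Nat.lt_succ_iff] using hk
          rw [(ih (n-k) (by omega)).1, (ih k (by omega)).1, (ih k (by omega)).2]
        have hsum2 : ∀ k ∈ range (n+1), c₂ (n - k) * c₁ k
            = NN 1 (n-k) * NN 2 k := by
          intro k hk
          have hk' : k ≤ n := by simpa [Nat.lt_succ_iff] using hk
          rw [(ih (n-k) (by omega)).2, (ih k (by omega)).1]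
        constructor
        · rw [hrec1 n, Finset.sum_congr rfl hsum1]
          have e1 : NN 2 (n+1) = NN 1 (n+1) + NN 4 n := NN_succ_succ 1 n
          have e2 : NN 1 (n+1) = NN 0 (n+1) + NN 3 n := NN_succ_succ 0 n
          rw [e1, e2, NN_zero_succ, zero_add]
          have c3 : NN 3 n = ∑ k ∈ range (n+1), NN 1 k * NN 2 (n-k) := NN_conv 2 n 1
          have c4 : NN 4 n = ∑ k ∈ range (n+1), NN 2 k * NN 2 (n-k) := NN_conv 2 n 2
          rw [c3, c4, ← Finset.sum_add_distrib]
          apply Finset.sum_congr rfl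
          intro k hk; ring
        · rw [hrec2 n, Finset.sum_congr rfl hsum2]
          have e2 : NN 1 (n+1) = NN 0 (n+1) + NN 3 n := NN_succ_succ 0 n
          rw [e2, NN_zero_succ, zero_add]
          have c3 : NN 3 n = ∑ k ∈ range (n+1), NN 2 k * NN 1 (n-k) := NN_conv 1 n 2
          rw [c3]
          apply Finset.sum_congr rfl
          intro k hk; ring
  intro n hn
  obtain ⟨m, rfl⟩ : ∃ m, n = m + 1 := ⟨n - 1, by omega⟩
  simp only [Nat.add_sub_cancel]
  have hnQ : ((m:ℚ) + 1) ≠ 0 := by positivity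
  have hm1 : (3*(m+1)+2) * NN 2 (m+1) = 2 * Nat.choose (3*(m+1)+2) (m+1) := NN_master (m+1) 2
  have hm2 : (3*(m+1)+1) * NN 1 (m+1) = 1 * Nat.choose (3*(m+1)+1) (m+1) := NN_master (m+1) 1
  have hc1 : (3*(m+1)+2) * Nat.choose (3*(m+1)+1) m = Nat.choose (3*(m+1)+2) (m+1) * (m+1) := by
    have := Nat.add_one_mul_choose_eq (3*(m+1)+1) m
    simpa [Nat.succ_eq_add_one] using this
  have hc2 : (3*(m+1)+1) * Nat.choose (3*(m+1)) m = Nat.choose (3*(m+1)+1) (m+1) * (m+1) := by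
    have := Nat.add_one_mul_choose_eq (3*(m+1)) m
    simpa [Nat.succ_eq_add_one] using this
  constructor
  · rw [(key (m+1)).1]
    have goalN : (m+1) * NN 2 (m+1) = 2 * Nat.choose (3*(m+1)+1) m := by
      apply Nat.eq_of_mul_eq_mul_left (show 0 < 3*(m+1)+2 by omega)
      calc (3*(m+1)+2) * ((m+1) * NN 2 (m+1))
          = (m+1) * ((3*(m+1)+2) * NN 2 (m+1)) := by ring
        _ = (m+1) * (2 * Nat.choose (3*(m+1)+2) (m+1)) := by rw [hm1]
        _ = 2 * (Nat.choose (3*(m+1)+2) (m+1) * (m+1)) := by ring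
        _ = 2 * ((3*(m+1)+2) * Nat.choose (3*(m+1)+1) m) := by rw [hc1]
        _ = (3*(m+1)+2) * (2 * Nat.choose (3*(m+1)+1) m) := by ring
    have hQ : ((m:ℚ)+1) * (NN 2 (m+1) : ℚ) = 2 * (Nat.choose (3*(m+1)+1) m : ℚ) := by
      exact_mod_cast goalN
    push_cast
    rw [div_mul_eq_mul_div, eq_div_iff hnQ]
    push_cast at hQ
    linear_combination hQ
  · rw [(key (m+1)).2]
    have goalN : (m+1) * NN 1 (m+1) = Nat.choose (3*(m+1)) m := by
      apply Nat.eq_of_mul_eq_mul_left (show 0 < 3*(m+1)+1 by omega)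
      calc (3*(m+1)+1) * ((m+1) * NN 1 (m+1))
          = (m+1) * ((3*(m+1)+1) * NN 1 (m+1)) := by ring
        _ = (m+1) * (1 * Nat.choose (3*(m+1)+1) (m+1)) := by rw [hm2]
        _ = Nat.choose (3*(m+1)+1) (m+1) * (m+1) := by ring
        _ = (3*(m+1)+1) * Nat.choose (3*(m+1)) m := by rw [hc2]
    have hQ : ((m:ℚ)+1) * (NN 1 (m+1) : ℚ) = (Nat.choose (3*(m+1)) m : ℚ) := by
      exact_mod_cast goalN
    push_cast
    rw [div_mul_eq_mul_div, eq_div_iff hnQ]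
    push_cast at hQ
    linear_combination hQ
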